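/- Let ξ, η be nonincreasing nonnegative sequences converging to 0. The following are equivalent: (i) there is a strictly increasing sequence of integers n_k with n_0 = 0 such that ∑_{j=n}^{n_k} (η_j − ξ_j) ≥ 0 for all n_{k−1} < n ≤ n_k and all k; (iii) there exists a nonincreasing nonnegative sequence ζ converging to 0 with ζ ≤ η pointwise and ζ ≺_b ξ; (iii') there exists a nonincreasing nonnegative sequence ρ converging to 0 with ξ ≤ ρ pointwise and η ≺_b ρ. -/

import Mathlib

open Finset Filter Topology

private lemma tail_nn (ξ η : ℕ → ℝ) (nk : ℕ → ℕ) (h0 : nk 0 = 0) (hmono : StrictMono nk)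
    (hcond : ∀ k m, nk k ≤ m → m < nk (k + 1) →
      0 ≤ ∑ j ∈ Finset.Ico m (nk (k + 1)), (η j - ξ j)) :
    ∀ K m, m ≤ nk K → 0 ≤ ∑ j ∈ Finset.Ico m (nk K), (η j - ξ j) := by
  intro K
  induction K with
  | zero =>
    intro m hm
    rw [h0] at hm
    interval_cases m
    simp [h0]
  | succ K ih =>
    intro m hm
    rcases lt_or_ge m (nk K) with h | h
    · rw [← Finset.sum_Ico_consecutive _ h.le (hmono (Nat.lt_succ_self K)).le]
      have h1 := ih m h.le
      have h2 := hcond K (nk K) le_rfl (hmono (Nat.lt_succ_self K))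
      linarith
    · rcases eq_or_lt_of_le hm with h' | h'
      · simp [h']
      · exact hcond K m h h'

private lemma blk_spec (f : ℕ → ℕ) (h0 : f 0 = 0) (hf : StrictMono f) (n : ℕ) :
    f (Nat.findGreatest (fun k => f k ≤ n) n) ≤ n ∧
      n < f (Nat.findGreatest (fun k => f k ≤ n) n + 1) := by
  constructor
  · exact Nat.findGreatest_spec (P := fun k => f k ≤ n) (Nat.zero_le n) (by omega)
  · by_contra hc
    push_neg at hc
    have h1 : Nat.findGreatest (fun k => f k ≤ n) n + 1 ≤ n := le_trans hf.le_apply hc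
    have := Nat.le_findGreatest (P := fun k => f k ≤ n) h1 hc
    omega

private lemma blk_eq (f : ℕ → ℕ) (h0 : f 0 = 0) (hf : StrictMono f) {n k : ℕ}
    (h1 : f k ≤ n) (h2 : n < f (k + 1)) : Nat.findGreatest (fun k => f k ≤ n) n = k := by
  have hs := blk_spec f h0 hf n
  set K := Nat.findGreatest (fun k => f k ≤ n) n with hK
  rcases lt_trichotomy K k with h | h | h
  · have h3 : K + 1 ≤ k := h
    have := hf.monotone h3
    omega
  · exact h
  · have h3 : k + 1 ≤ K := h
    have := hf.monotone h3
    omega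

private lemma dir_iii_to_i (ξ η ζ : ℕ → ℝ) (hζη : ∀ n, ζ n ≤ η n)
    (hζξ : ∀ n, ∑ j ∈ range n, ζ j ≤ ∑ j ∈ range n, ξ j)
    (mk : ℕ → ℕ) (hmk : StrictMono mk)
    (heq : ∀ k, ∑ j ∈ range (mk k), ζ j = ∑ j ∈ range (mk k), ξ j) :
    ∃ nk : ℕ → ℕ, nk 0 = 0 ∧ StrictMono nk ∧
      ∀ k m, nk k ≤ m → m < nk (k + 1) →
        0 ≤ ∑ j ∈ Finset.Ico m (nk (k + 1)), (η j - ξ j) := by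
  refine ⟨fun k => if k = 0 then 0 else mk k, by simp, ?_, ?_⟩
  · intro i j hij
    dsimp only
    by_cases hi : i = 0
    · subst hi
      rw [if_pos rfl, if_neg (by omega : ¬ j = 0)]
      exact lt_of_lt_of_le hij hmk.le_apply
    · rw [if_neg hi, if_neg (by omega : ¬ j = 0)]
      exact hmk hij
  · intro k m hm hlt
    dsimp only at hm hlt ⊢
    have hb : (if k + 1 = 0 then 0 else mk (k + 1)) = mk (k + 1) := if_neg (Nat.succ_ne_zero k)
    rw [hb] at hlt ⊢
    have hmb : m ≤ mk (k + 1) := hlt.le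
    have s1 : ∑ j ∈ Finset.Ico m (mk (k+1)), ζ j
        = ∑ j ∈ range (mk (k+1)), ζ j - ∑ j ∈ range m, ζ j := Finset.sum_Ico_eq_sub _ hmb
    have s2 : ∑ j ∈ Finset.Ico m (mk (k+1)), η j
        = ∑ j ∈ range (mk (k+1)), η j - ∑ j ∈ range m, η j := Finset.sum_Ico_eq_sub _ hmb
    have s3 : ∑ j ∈ Finset.Ico m (mk (k+1)), ξ j
        = ∑ j ∈ range (mk (k+1)), ξ j - ∑ j ∈ range m, ξ j := Finset.sum_Ico_eq_sub _ hmb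
    have e2 : ∑ j ∈ Finset.Ico m (mk (k+1)), ζ j ≤ ∑ j ∈ Finset.Ico m (mk (k+1)), η j :=
      Finset.sum_le_sum fun j _ => hζη j
    have e3 := heq (k + 1)
    have e4 := hζξ m
    have e5 : ∑ j ∈ Finset.Ico m (mk (k+1)), (η j - ξ j)
        = ∑ j ∈ Finset.Ico m (mk (k+1)), η j - ∑ j ∈ Finset.Ico m (mk (k+1)), ξ j :=
      Finset.sum_sub_distrib _ _
    linarith

private lemma dir_iii'_to_i (ξ η ρ : ℕ → ℝ) (hξρ : ∀ n, ξ n ≤ ρ n)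
    (hηρ : ∀ n, ∑ j ∈ range n, η j ≤ ∑ j ∈ range n, ρ j)
    (mk : ℕ → ℕ) (hmk : StrictMono mk)
    (heq : ∀ k, ∑ j ∈ range (mk k), η j = ∑ j ∈ range (mk k), ρ j) :
    ∃ nk : ℕ → ℕ, nk 0 = 0 ∧ StrictMono nk ∧
      ∀ k m, nk k ≤ m → m < nk (k + 1) →
        0 ≤ ∑ j ∈ Finset.Ico m (nk (k + 1)), (η j - ξ j) := by
  refine ⟨fun k => if k = 0 then 0 else mk k, by simp, ?_, ?_⟩
  · intro i j hij
    dsimp only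
    by_cases hi : i = 0
    · subst hi
      rw [if_pos rfl, if_neg (by omega : ¬ j = 0)]
      exact lt_of_lt_of_le hij hmk.le_apply
    · rw [if_neg hi, if_neg (by omega : ¬ j = 0)]
      exact hmk hij
  · intro k m hm hlt
    dsimp only at hm hlt ⊢
    have hb : (if k + 1 = 0 then 0 else mk (k + 1)) = mk (k + 1) := if_neg (Nat.succ_ne_zero k)
    rw [hb] at hlt ⊢
    have hmb : m ≤ mk (k + 1) := hlt.le
    have s1 : ∑ j ∈ Finset.Ico m (mk (k+1)), ρ j
        = ∑ j ∈ range (mk (k+1)), ρ j - ∑ j ∈ range m, ρ j := Finset.sum_Ico_eq_sub _ hmb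
    have s2 : ∑ j ∈ Finset.Ico m (mk (k+1)), η j
        = ∑ j ∈ range (mk (k+1)), η j - ∑ j ∈ range m, η j := Finset.sum_Ico_eq_sub _ hmb
    have s3 : ∑ j ∈ Finset.Ico m (mk (k+1)), ξ j
        = ∑ j ∈ range (mk (k+1)), ξ j - ∑ j ∈ range m, ξ j := Finset.sum_Ico_eq_sub _ hmb
    have e2 : ∑ j ∈ Finset.Ico m (mk (k+1)), ξ j ≤ ∑ j ∈ Finset.Ico m (mk (k+1)), ρ j :=
      Finset.sum_le_sum fun j _ => hξρ j
    have e3 := heq (k + 1)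
    have e4 := hηρ m
    have e5 : ∑ j ∈ Finset.Ico m (mk (k+1)), (η j - ξ j)
        = ∑ j ∈ Finset.Ico m (mk (k+1)), η j - ∑ j ∈ Finset.Ico m (mk (k+1)), ξ j :=
      Finset.sum_sub_distrib _ _
    linarith

private lemma dir_i_to_iii (ξ η : ℕ → ℝ)
    (hξa : Antitone ξ) (hξ0 : ∀ n, 0 ≤ ξ n)
    (hηa : Antitone η) (hη0 : ∀ n, 0 ≤ η n) (hηl : Tendsto η atTop (nhds 0))
    (nk : ℕ → ℕ) (h0 : nk 0 = 0) (hmono : StrictMono nk)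
    (hcond : ∀ k m, nk k ≤ m → m < nk (k + 1) →
      0 ≤ ∑ j ∈ Finset.Ico m (nk (k + 1)), (η j - ξ j)) :
    ∃ ζ : ℕ → ℝ, Antitone ζ ∧ (∀ n, 0 ≤ ζ n) ∧ Tendsto ζ atTop (nhds 0) ∧
      (∀ n, ζ n ≤ η n) ∧
      (∀ n, ∑ j ∈ Finset.range n, ζ j ≤ ∑ j ∈ Finset.range n, ξ j) ∧
      ∃ mk : ℕ → ℕ, StrictMono mk ∧
        ∀ k, ∑ j ∈ Finset.range (mk k), ζ j = ∑ j ∈ Finset.range (mk k), ξ j := by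
  classical
  have hP := tail_nn ξ η nk h0 hmono hcond
  have hP' : ∀ K m, m ≤ nk K →
      ∑ j ∈ Finset.Ico m (nk K), ξ j ≤ ∑ j ∈ Finset.Ico m (nk K), η j := by
    intro K m hm
    have h1 := hP K m hm
    rw [Finset.sum_sub_distrib] at h1
    linarith
  have hkey : ∀ k, ∃ t, (0 ≤ t ∧ t ≤ η (nk k)) ∧
      (∑ j ∈ Finset.Ico (nk k) (nk (k+1)), min (η j) t
        = ∑ j ∈ Finset.Ico (nk k) (nk (k+1)), ξ j) ∧
      ∀ t', 0 ≤ t' → t' ≤ η (nk k) →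
        (∑ j ∈ Finset.Ico (nk k) (nk (k+1)), min (η j) t'
          = ∑ j ∈ Finset.Ico (nk k) (nk (k+1)), ξ j) → t ≤ t' := by
    intro k
    set g : ℝ → ℝ := fun t => ∑ j ∈ Finset.Ico (nk k) (nk (k+1)), min (η j) t with hgdef
    have hgc : Continuous g := continuous_finset_sum _ fun j _ => continuous_const.min continuous_id
    set T : Set ℝ := Set.Icc 0 (η (nk k)) ∩ g ⁻¹' {∑ j ∈ Finset.Ico (nk k) (nk (k+1)), ξ j} with hT
    have hclosed : IsClosed T := isClosed_Icc.inter (isClosed_singleton.preimage hgc)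
    have hne : T.Nonempty := by
      have hsub := intermediate_value_Icc (hη0 (nk k)) hgc.continuousOn
      have hg0 : g 0 = 0 := Finset.sum_eq_zero fun j _ => min_eq_right (hη0 j)
      have hgtop : g (η (nk k)) = ∑ j ∈ Finset.Ico (nk k) (nk (k+1)), η j :=
        Finset.sum_congr rfl fun j hj => min_eq_left (hηa (Finset.mem_Ico.mp hj).1)
      have hmem : (∑ j ∈ Finset.Ico (nk k) (nk (k+1)), ξ j) ∈ Set.Icc (g 0) (g (η (nk k))) := by
        constructor
        · rw [hg0]; exact Finset.sum_nonneg fun j _ => hξ0 j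
        · rw [hgtop]; exact hP' (k+1) (nk k) (hmono (Nat.lt_succ_self k)).le
      obtain ⟨t, ht, hgt⟩ := hsub hmem
      exact ⟨t, ht, hgt⟩
    have hbdd : BddBelow T := BddBelow.mono Set.inter_subset_left bddBelow_Icc
    have hmem := hclosed.csInf_mem hne hbdd
    refine ⟨sInf T, ⟨hmem.1.1, hmem.1.2⟩, hmem.2, ?_⟩
    intro t' h1 h2 h3
    exact csInf_le hbdd ⟨⟨h1, h2⟩, h3⟩
  choose t ht0 hteq htmin using hkey
  set blk : ℕ → ℕ := fun n => Nat.findGreatest (fun k => nk k ≤ n) n with hblkdef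
  have hblk : ∀ n, nk (blk n) ≤ n ∧ n < nk (blk n + 1) := fun n => blk_spec nk h0 hmono n
  have hblkeq : ∀ {k j}, nk k ≤ j → j < nk (k+1) → blk j = k :=
    fun h1 h2 => blk_eq nk h0 hmono h1 h2
  set ζ : ℕ → ℝ := fun n => min (η n) (t (blk n)) with hζdef
  have hζblk : ∀ {k j}, nk k ≤ j → j < nk (k+1) → ζ j = min (η j) (t k) := by
    intro k j h1 h2
    rw [hζdef]
    dsimp only
    rw [hblkeq h1 h2]
  -- generic tail estimate
  have key2 : ∀ (a b : ℕ) (c : ℝ), ξ a ≤ c →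
      (∀ m, m ≤ b → ∑ j ∈ Finset.Ico m b, ξ j ≤ ∑ j ∈ Finset.Ico m b, η j) →
      ∑ j ∈ Finset.Ico a b, ξ j ≤ ∑ j ∈ Finset.Ico a b, min (η j) c := by
    intro a b c hc hdom
    rcases le_or_gt a b with hab | hab
    · have hex : ∃ j, b ≤ j ∨ (a ≤ j ∧ η j ≤ c) := ⟨b, Or.inl le_rfl⟩
      set j0 := Nat.find hex with hj0def
      have hspec := Nat.find_spec hex
      have hj0le : j0 ≤ b := Nat.find_le (Or.inl le_rfl)
      have hj0ge : a ≤ j0 := by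
        by_contra hcon
        push_neg at hcon
        rcases hspec with h | h
        · omega
        · omega
      rw [← Finset.sum_Ico_consecutive ξ hj0ge hj0le,
          ← Finset.sum_Ico_consecutive (fun j => min (η j) c) hj0ge hj0le]
      have part1 : ∑ j ∈ Finset.Ico a j0, ξ j ≤ ∑ j ∈ Finset.Ico a j0, min (η j) c := by
        apply Finset.sum_le_sum
        intro j hj
        rw [Finset.mem_Ico] at hj
        have hmin := Nat.find_min hex hj.2
        push_neg at hmin
        have h1 : c < η j := hmin.2 hj.1
        have h2 : ξ j ≤ ξ a := hξa hj.1
        exact le_min (by linarith) (by linarith)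
      have part2 : ∑ j ∈ Finset.Ico j0 b, ξ j ≤ ∑ j ∈ Finset.Ico j0 b, min (η j) c := by
        rcases hspec with h | h
        · have hb : j0 = b := le_antisymm hj0le h
          simp [hb]
        · have he : ∑ j ∈ Finset.Ico j0 b, min (η j) c = ∑ j ∈ Finset.Ico j0 b, η j :=
            Finset.sum_congr rfl fun j hj => min_eq_left
              (le_trans (hηa (Finset.mem_Ico.mp hj).1) h.2)
          rw [he]
          exact hdom j0 hj0le
      linarith
    · rw [Finset.Ico_eq_empty (by omega)]
      simp
  have htail : ∀ k n, nk k ≤ n → n ≤ nk (k+1) →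
      ∑ j ∈ Finset.Ico n (nk (k+1)), ξ j ≤ ∑ j ∈ Finset.Ico n (nk (k+1)), min (η j) (t k) := by
    intro k n hn1 hn2
    by_cases hc : ξ n ≤ t k
    · exact key2 n (nk (k+1)) (t k) hc (fun m hm => hP' (k+1) m hm)
    · push_neg at hc
      have hpre : ∑ j ∈ Finset.Ico (nk k) n, min (η j) (t k) ≤ ∑ j ∈ Finset.Ico (nk k) n, ξ j :=
        Finset.sum_le_sum fun j hj => by
          rw [Finset.mem_Ico] at hj
          calc min (η j) (t k) ≤ t k := min_le_right _ _
          _ ≤ ξ j := le_trans hc.le (hξa hj.2.le)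
      have e5 := hteq k
      have e6 := Finset.sum_Ico_consecutive (fun j => min (η j) (t k)) hn1 hn2
      have e7 := Finset.sum_Ico_consecutive ξ hn1 hn2
      linarith
  have hcross : ∀ n k, n + 1 = nk (k+1) → min (η (n+1)) (t (k+1)) ≤ min (η n) (t k) := by
    intro n k hb
    by_cases hc : η (n+1) ≤ t k
    · exact le_min (le_trans (min_le_left _ _) (hηa (Nat.le_succ n)))
        (le_trans (min_le_left _ _) hc)
    · push_neg at hc
      have hflat : ∀ j ∈ Finset.Ico (nk k) (nk (k+1)), min (η j) (t k) = t k := by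
        intro j hj
        rw [Finset.mem_Ico] at hj
        have h1 : η (n+1) ≤ η j := hηa (by omega)
        exact min_eq_right (by linarith)
      have hcardpos : 0 < nk (k+1) - nk k := by
        have h9 : nk k < nk (k+1) := hmono (Nat.lt_succ_self k)
        omega
      have hcard : ((nk (k+1) - nk k : ℕ) : ℝ) * t k
          = ∑ j ∈ Finset.Ico (nk k) (nk (k+1)), ξ j := by
        have h2 := hteq k
        rw [Finset.sum_congr rfl hflat, Finset.sum_const, Nat.card_Ico, nsmul_eq_mul] at h2
        exact h2
      have hξn : ξ n ≤ t k := by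
        have hlow : ((nk (k+1) - nk k : ℕ) : ℝ) * ξ n
            ≤ ∑ j ∈ Finset.Ico (nk k) (nk (k+1)), ξ j := by
          have e1 : ((nk (k+1) - nk k : ℕ) : ℝ) * ξ n
              = ∑ _j ∈ Finset.Ico (nk k) (nk (k+1)), ξ n := by
            rw [Finset.sum_const, Nat.card_Ico, nsmul_eq_mul]
          rw [e1]
          apply Finset.sum_le_sum
          intro j hj
          rw [Finset.mem_Ico] at hj
          exact hξa (by omega)
        rw [← hcard] at hlow
        have hpos : (0:ℝ) < ((nk (k+1) - nk k : ℕ) : ℝ) := by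
          exact_mod_cast hcardpos
        exact (mul_le_mul_iff_right₀ hpos).mp hlow
      have hg2 : ∑ j ∈ Finset.Ico (nk (k+1)) (nk (k+2)), ξ j
          ≤ ∑ j ∈ Finset.Ico (nk (k+1)) (nk (k+2)), min (η j) (t k) := by
        apply key2 (nk (k+1)) (nk (k+2)) (t k)
        · have : ξ (n+1) ≤ ξ n := hξa (Nat.le_succ n)
          rw [hb] at this
          linarith
        · exact fun m hm => hP' (k+2) m hm
      have hivt : ∃ t', (0 ≤ t' ∧ t' ≤ t k) ∧
          ∑ j ∈ Finset.Ico (nk (k+1)) (nk (k+2)), min (η j) t'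
            = ∑ j ∈ Finset.Ico (nk (k+1)) (nk (k+2)), ξ j := by
        set g : ℝ → ℝ := fun s => ∑ j ∈ Finset.Ico (nk (k+1)) (nk (k+2)), min (η j) s with hgdef
        have hgc : Continuous g :=
          continuous_finset_sum _ fun j _ => continuous_const.min continuous_id
        have hsub := intermediate_value_Icc (ht0 k).1 hgc.continuousOn
        have hg0 : g 0 = 0 := Finset.sum_eq_zero fun j _ => min_eq_right (hη0 j)
        have hmem : (∑ j ∈ Finset.Ico (nk (k+1)) (nk (k+2)), ξ j) ∈ Set.Icc (g 0) (g (t k)) := by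
          constructor
          · rw [hg0]; exact Finset.sum_nonneg fun j _ => hξ0 j
          · exact hg2
        obtain ⟨t', ht', hgt'⟩ := hsub hmem
        exact ⟨t', ht', hgt'⟩
      obtain ⟨t', ⟨ht'0, ht'le⟩, ht'eq⟩ := hivt
      have ht'η : t' ≤ η (nk (k+1)) := by
        rw [← hb]
        linarith
      have hmin2 := htmin (k+1) t' ht'0 ht'η ht'eq
      exact le_min (le_trans (min_le_left _ _) (hηa (Nat.le_succ n)))
        (le_trans (min_le_right _ _) (le_trans hmin2 ht'le))
  have hζanti : Antitone ζ := by
    apply antitone_nat_of_succ_le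
    intro n
    obtain ⟨h1, h2⟩ := hblk n
    rcases lt_or_eq_of_le (Nat.succ_le_of_lt h2) with h | h
    · have e1 : ζ (n+1) = min (η (n+1)) (t (blk n)) := hζblk (le_trans h1 (Nat.le_succ n)) h
      have e2 : ζ n = min (η n) (t (blk n)) := hζblk h1 h2
      rw [e1, e2]
      exact min_le_min (hηa (Nat.le_succ n)) le_rfl
    · have e2 : ζ n = min (η n) (t (blk n)) := hζblk h1 h2
      have e1 : ζ (n+1) = min (η (n+1)) (t (blk n + 1)) := by
        have h3 : nk (blk n + 1) < nk (blk n + 1 + 1) := hmono (by omega)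
        exact hζblk (by omega) (by omega)
      rw [e1, e2]
      exact hcross n (blk n) h
  have heqZ : ∀ k, ∑ j ∈ Finset.range (nk k), ζ j = ∑ j ∈ Finset.range (nk k), ξ j := by
    intro k
    induction k with
    | zero => rw [h0]; simp
    | succ k ih =>
      have hsplit1 := Finset.sum_Ico_eq_sub ζ (hmono (Nat.lt_succ_self k)).le
      have hsplit2 := Finset.sum_Ico_eq_sub ξ (hmono (Nat.lt_succ_self k)).le
      have hblocks : ∑ j ∈ Finset.Ico (nk k) (nk (k+1)), ζ j
          = ∑ j ∈ Finset.Ico (nk k) (nk (k+1)), min (η j) (t k) :=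
        Finset.sum_congr rfl fun j hj => by
          rw [Finset.mem_Ico] at hj; exact hζblk hj.1 hj.2
      have h2 := hteq k
      linarith
  have hZX : ∀ n, ∑ j ∈ Finset.range n, ζ j ≤ ∑ j ∈ Finset.range n, ξ j := by
    intro n
    obtain ⟨h1, h2⟩ := hblk n
    have e1 := Finset.sum_Ico_eq_sub ζ h1
    have e2 := Finset.sum_Ico_eq_sub ξ h1
    have e3 : ∑ j ∈ Finset.Ico (nk (blk n)) n, ζ j
        = ∑ j ∈ Finset.Ico (nk (blk n)) n, min (η j) (t (blk n)) :=
      Finset.sum_congr rfl fun j hj => by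
        rw [Finset.mem_Ico] at hj; exact hζblk hj.1 (lt_trans hj.2 h2)
    have e4 := htail (blk n) n h1 h2.le
    have e5 := hteq (blk n)
    have e6 := Finset.sum_Ico_consecutive (fun j => min (η j) (t (blk n))) h1 h2.le
    have e7 := Finset.sum_Ico_consecutive ξ h1 h2.le
    have e8 := heqZ (blk n)
    linarith
  refine ⟨ζ, hζanti, fun n => le_min (hη0 n) (ht0 (blk n)).1, ?_,
    fun n => min_le_left _ _, hZX, nk, hmono, heqZ⟩
  exact squeeze_zero (fun n => le_min (hη0 n) (ht0 (blk n)).1) (fun n => min_le_left _ _) hηl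

private lemma dir_i_to_iii' (ξ η : ℕ → ℝ)
    (hξa : Antitone ξ) (hξ0 : ∀ n, 0 ≤ ξ n) (hξl : Tendsto ξ atTop (nhds 0))
    (hηa : Antitone η) (hη0 : ∀ n, 0 ≤ η n) (hηl : Tendsto η atTop (nhds 0))
    (nk : ℕ → ℕ) (h0 : nk 0 = 0) (hmono : StrictMono nk)
    (hcond : ∀ k m, nk k ≤ m → m < nk (k + 1) →
      0 ≤ ∑ j ∈ Finset.Ico m (nk (k + 1)), (η j - ξ j)) :
    ∃ ρ : ℕ → ℝ, Antitone ρ ∧ (∀ n, 0 ≤ ρ n) ∧ Tendsto ρ atTop (nhds 0) ∧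
      (∀ n, ξ n ≤ ρ n) ∧
      (∀ n, ∑ j ∈ Finset.range n, η j ≤ ∑ j ∈ Finset.range n, ρ j) ∧
      ∃ mk : ℕ → ℕ, StrictMono mk ∧
        ∀ k, ∑ j ∈ Finset.range (mk k), η j = ∑ j ∈ Finset.range (mk k), ρ j := by
  classical
  have hP := tail_nn ξ η nk h0 hmono hcond
  set X : ℕ → ℝ := fun n => ∑ j ∈ Finset.range n, ξ j with hXdef
  set H : ℕ → ℝ := fun n => ∑ j ∈ Finset.range n, η j with hHdef
  set D : ℕ → ℝ := fun n => ∑ j ∈ Finset.range n, (η j - ξ j) with hDdef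
  have hDHX : ∀ n, D n = H n - X n := by
    intro n
    rw [hDdef, hHdef, hXdef]
    dsimp only
    rw [Finset.sum_sub_distrib]
  set Dm : ℕ → ℝ := fun n => (Finset.range (n+1)).sup' Finset.nonempty_range_add_one D with hDmdef
  have hDle : ∀ n, D n ≤ Dm n := fun n => Finset.le_sup' D (Finset.self_mem_range_succ n)
  have hDmono : Monotone Dm := by
    intro m n hmn
    apply Finset.sup'_le
    intro i hi
    apply Finset.le_sup' D
    rw [Finset.mem_range] at hi ⊢
    omega
  have hDmsucc : ∀ n, Dm (n+1) = max (D (n+1)) (Dm n) := by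
    intro n
    apply le_antisymm
    · apply Finset.sup'_le
      intro i hi
      rw [Finset.mem_range] at hi
      rcases Nat.lt_succ_iff_lt_or_eq.mp hi with h | h
      · exact le_max_of_le_right (Finset.le_sup' D (by rw [Finset.mem_range]; omega))
      · rw [h]; exact le_max_left _ _
    · apply max_le
      · exact Finset.le_sup' D (Finset.self_mem_range_succ (n+1))
      · exact hDmono (Nat.le_succ n)
  have hDsucc : ∀ n, D (n+1) = D n + (η n - ξ n) := fun n => Finset.sum_range_succ _ n
  have hXsucc : ∀ n, X (n+1) = X n + ξ n := fun n => Finset.sum_range_succ _ n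
  set G : ℕ → ℝ := fun n => X n + Dm n with hGdef
  have hG0 : G 0 = 0 := by
    rw [hGdef]
    dsimp only
    have h1 : X 0 = 0 := Finset.sum_range_zero _
    have h2 : Dm 0 = D 0 := by
      apply le_antisymm _ (hDle 0)
      apply Finset.sup'_le
      intro i hi
      rw [Finset.mem_range] at hi
      interval_cases i
      exact le_rfl
    have h3 : D 0 = 0 := Finset.sum_range_zero _
    rw [h1, h2, h3]; ring
  have hGlb : ∀ n, ξ n ≤ G (n+1) - G n := by
    intro n
    have h1 : Dm n ≤ Dm (n+1) := hDmono (Nat.le_succ n)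
    have h2 := hXsucc n
    rw [hGdef]; dsimp only
    linarith
  have hGub : ∀ n, G (n+1) - G n ≤ ξ n + η n := by
    intro n
    have h1 := hDmsucc n
    have h2 := hDsucc n
    have h3 := hDle n
    have h4 : Dm (n+1) ≤ Dm n + η n := by
      rw [h1]
      apply max_le
      · have := hξ0 n; linarith
      · have := hη0 n; linarith
    have h5 := hXsucc n
    rw [hGdef]; dsimp only
    linarith
  have hGmono : Monotone G := monotone_nat_of_le_succ fun n => by
    have h1 := hGlb n; have h2 := hξ0 n; linarith
  have hΔG0 : Tendsto (fun n => G (n+1) - G n) atTop (nhds 0) := by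
    apply squeeze_zero (fun n => le_trans (hξ0 n) (hGlb n)) (fun n => hGub n)
    simpa using hξl.add hηl
  have hNt : ∀ K, Dm (nk K) = D (nk K) := by
    intro K
    apply le_antisymm _ (hDle _)
    apply Finset.sup'_le
    intro m hm
    rw [Finset.mem_range] at hm
    have hm' : m ≤ nk K := by omega
    have h1 := hP K m hm'
    have h2 : ∑ j ∈ Finset.Ico m (nk K), (η j - ξ j) = D (nk K) - D m :=
      Finset.sum_Ico_eq_sub _ hm'
    linarith
  -- Cesaro
  have htele : ∀ a b : ℕ, a ≤ b → ∑ j ∈ Finset.Ico a b, (G (j+1) - G j) = G b - G a := by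
    intro a b hab
    induction b, hab using Nat.le_induction with
    | base => simp
    | succ b hab ih =>
      rw [Finset.sum_Ico_succ_top hab, ih]
      ring
  have hces : ∀ u : ℕ, Tendsto (fun w => (G w - G u) / ((w : ℝ) - (u : ℝ))) atTop (nhds 0) := by
    intro u
    rw [← tendsto_add_atTop_iff_nat u]
    have h1 : Tendsto ((fun n => G (n+1) - G n) ∘ (fun i => i + u)) atTop (nhds 0) :=
      hΔG0.comp (tendsto_add_atTop_nat u)
    have h2 := h1.cesaro
    have h4 : ∀ n : ℕ, (G (n + u) - G u) / (((n + u : ℕ) : ℝ) - (u:ℝ))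
        = (n : ℝ)⁻¹ * ∑ i ∈ Finset.range n, ((fun n => G (n+1) - G n) ∘ (fun i => i + u)) i := by
      intro n
      have h3 : ∑ i ∈ Finset.range n, ((fun n => G (n+1) - G n) ∘ (fun i => i + u)) i
          = G (n + u) - G u := by
        have h5 := Finset.sum_range_sub (fun i => G (i + u)) n
        simp only [Function.comp]
        convert h5 using 2 with i
        · ring_nf
        · simp
      rw [h3, div_eq_inv_mul]
      congr 1
      push_cast
      ring
    simpa only [h4] using h2
  -- hull step
  have hnext : ∀ u : ℕ, ∃ v, u < v ∧ ∀ w, u < w →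
      (G w - G u) / ((w:ℝ) - u) ≤ (G v - G u) / ((v:ℝ) - u) := by
    intro u
    by_cases hall : ∀ w, G w ≤ G u
    · refine ⟨u + 1, Nat.lt_succ_self u, ?_⟩
      intro w hw
      have hden : (0:ℝ) < (w:ℝ) - u := by
        have : (u:ℝ) < w := by exact_mod_cast hw
        linarith
      have h1 : (G w - G u) / ((w:ℝ) - u) ≤ 0 :=
        div_nonpos_of_nonpos_of_nonneg (by have := hall w; linarith) hden.le
      have h2 : (0:ℝ) ≤ (G (u+1) - G u) / (((u+1:ℕ):ℝ) - u) := by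
        apply div_nonneg
        · have := hGmono (Nat.le_succ u); linarith
        · push_cast; linarith
      linarith
    · push_neg at hall
      obtain ⟨w0, hw0⟩ := hall
      have hw0u : u < w0 := by
        by_contra hcon
        push_neg at hcon
        exact absurd (hGmono hcon) (not_le.mpr hw0)
      have hεpos : 0 < (G w0 - G u) / ((w0:ℝ) - u) := by
        apply div_pos (by linarith)
        have : (u:ℝ) < w0 := by exact_mod_cast hw0u
        linarith
      have hev := (hces u).eventually (gt_mem_nhds hεpos)
      rw [eventually_atTop] at hev
      obtain ⟨V, hV⟩ := hev
      have hne : (Finset.Icc (u+1) (max V w0)).Nonempty := by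
        rw [Finset.nonempty_Icc]; omega
      obtain ⟨v, hv, hvmax⟩ := Finset.exists_max_image (Finset.Icc (u+1) (max V w0))
        (fun w => (G w - G u) / ((w:ℝ) - u)) hne
      rw [Finset.mem_Icc] at hv
      refine ⟨v, by omega, ?_⟩
      intro w hw
      rcases le_or_gt w (max V w0) with h | h
      · exact hvmax w (Finset.mem_Icc.mpr ⟨by omega, h⟩)
      · have h1 : (G w - G u)/((w:ℝ) - u) < (G w0 - G u) / ((w0:ℝ) - u) := hV w (by omega)
        have h2 : (G w0 - G u) / ((w0:ℝ) - u) ≤ (G v - G u)/((v:ℝ) - u) :=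
          hvmax w0 (Finset.mem_Icc.mpr ⟨by omega, le_max_right _ _⟩)
        linarith
  choose nxt hlt hmax using hnext
  set u : ℕ → ℕ := fun k => nxt^[k] 0 with hudef
  have husucc : ∀ k, u (k+1) = nxt (u k) := fun k => Function.iterate_succ_apply' nxt k 0
  have humono : StrictMono u := strictMono_nat_of_lt_succ fun k => by
    rw [husucc]; exact hlt (u k)
  have hu0 : u 0 = 0 := rfl
  set σ : ℕ → ℝ := fun k => (G (u (k+1)) - G (u k)) / ((u (k+1) : ℝ) - (u k : ℝ)) with hσdef
  have hslope : ∀ k w, u k < w → (G w - G (u k)) / ((w:ℝ) - u k) ≤ σ k := by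
    intro k w hw
    have h := hmax (u k) w hw
    rw [hσdef]; dsimp only
    rw [husucc]
    exact h
  have hupos : ∀ k, (0:ℝ) < (u (k+1):ℝ) - u k := by
    intro k
    have : u k < u (k+1) := humono (Nat.lt_succ_self k)
    have : (u k:ℝ) < u (k+1) := by exact_mod_cast this
    linarith
  have hσξ : ∀ k, ξ (u k) ≤ σ k := by
    intro k
    have h := hslope k (u k + 1) (Nat.lt_succ_self _)
    have hde : ((u k + 1 : ℕ):ℝ) - (u k : ℝ) = 1 := by push_cast; ring
    rw [hde, div_one] at h
    have := hGlb (u k)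
    linarith
  have hσ0 : ∀ k, 0 ≤ σ k := fun k => le_trans (hξ0 _) (hσξ k)
  have hσmono : ∀ k, σ (k+1) ≤ σ k := by
    intro k
    have hw : u k < u (k+2) := humono (by omega)
    have h := hslope k (u (k+2)) hw
    have hp1 : (0:ℝ) < (u (k+1):ℝ) - u k := hupos k
    have hp2 : (0:ℝ) < (u (k+2):ℝ) - u (k+1) := hupos (k+1)
    have hp3 : (0:ℝ) < (u (k+2):ℝ) - u k := by linarith
    rw [div_le_div_iff₀ hp3 hp1] at h
    rw [hσdef]
    dsimp only
    rw [div_le_div_iff₀ hp2 hp1]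
    nlinarith [h]
  have hσanti : Antitone σ := antitone_nat_of_succ_le hσmono
  set blk : ℕ → ℕ := fun n => Nat.findGreatest (fun k => u k ≤ n) n with hblkdef
  have hblk : ∀ n, u (blk n) ≤ n ∧ n < u (blk n + 1) := fun n => blk_spec u hu0 humono n
  have hblkeq : ∀ {k j}, u k ≤ j → j < u (k+1) → blk j = k :=
    fun h1 h2 => blk_eq u hu0 humono h1 h2
  set ρ : ℕ → ℝ := fun n => σ (blk n) with hρdef
  have hρblk : ∀ {k j}, u k ≤ j → j < u (k+1) → ρ j = σ k := by
    intro k j h1 h2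
    rw [hρdef]
    dsimp only
    rw [hblkeq h1 h2]
  have hρanti : Antitone ρ := by
    apply antitone_nat_of_succ_le
    intro n
    obtain ⟨h1, h2⟩ := hblk n
    rcases lt_or_eq_of_le (Nat.succ_le_of_lt h2) with h | h
    · have e1 : ρ (n+1) = σ (blk n) := hρblk (le_trans h1 (Nat.le_succ n)) h
      have e2 : ρ n = σ (blk n) := hρblk h1 h2
      rw [e1, e2]
    · have e2 : ρ n = σ (blk n) := hρblk h1 h2
      have e1 : ρ (n+1) = σ (blk n + 1) := by
        have h3 : u (blk n + 1) < u (blk n + 1 + 1) := humono (by omega)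
        exact hρblk (by omega) (by omega)
      rw [e1, e2]
      exact hσmono (blk n)
  have hρξ : ∀ n, ξ n ≤ ρ n := by
    intro n
    obtain ⟨h1, h2⟩ := hblk n
    have e2 : ρ n = σ (blk n) := hρblk h1 h2
    rw [e2]
    exact le_trans (hξa h1) (hσξ (blk n))
  have hρ0 : ∀ n, 0 ≤ ρ n := fun n => le_trans (hξ0 n) (hρξ n)
  -- block sums of ρ
  have hIco : ∀ k a b, u k ≤ a → a ≤ b → b ≤ u (k+1) →
      ∑ j ∈ Finset.Ico a b, ρ j = ((b:ℝ) - (a:ℝ)) * σ k := by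
    intro k a b hka hab hbk
    have hconst : ∀ j ∈ Finset.Ico a b, ρ j = σ k := by
      intro j hj
      rw [Finset.mem_Ico] at hj
      exact hρblk (by omega) (by omega)
    rw [Finset.sum_congr rfl hconst, Finset.sum_const, Nat.card_Ico, nsmul_eq_mul]
    congr 1
    push_cast [Nat.cast_sub hab]
    ring
  set P : ℕ → ℝ := fun n => ∑ j ∈ Finset.range n, ρ j with hPdef
  have htouch : ∀ k, P (u k) = G (u k) := by
    intro k
    induction k with
    | zero => rw [hu0]; rw [hPdef]; dsimp only; rw [Finset.sum_range_zero, hG0]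
    | succ k ih =>
      have hle : u k ≤ u (k+1) := (humono (Nat.lt_succ_self k)).le
      have e1 := Finset.sum_Ico_eq_sub ρ hle
      have e2 := hIco k (u k) (u (k+1)) le_rfl hle le_rfl
      have e3 : ((u (k+1):ℝ) - (u k:ℝ)) * σ k = G (u (k+1)) - G (u k) := by
        rw [hσdef]
        dsimp only
        rw [mul_comm]
        exact div_mul_cancel₀ _ (ne_of_gt (hupos k))
      rw [hPdef] at ih ⊢
      dsimp only at ih e1 ⊢
      linarith
  have hPG : ∀ n, G n ≤ P n := by
    intro n
    obtain ⟨h1, h2⟩ := hblk n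
    rcases eq_or_lt_of_le h1 with h | h
    · rw [← h]
      exact (htouch (blk n)).ge
    · have e1 := Finset.sum_Ico_eq_sub ρ h1
      have e2 := hIco (blk n) (u (blk n)) n le_rfl h1 h2.le
      have e3 := hslope (blk n) n h
      have hpos : (0:ℝ) < (n:ℝ) - u (blk n) := by
        have : (u (blk n):ℝ) < n := by exact_mod_cast h
        linarith
      rw [div_le_iff₀ hpos] at e3
      have e4 := htouch (blk n)
      rw [hPdef] at e4 ⊢
      dsimp only at e1 e4 ⊢
      nlinarith [e2, e3]
  have hPH : ∀ n, H n ≤ P n := by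
    intro n
    have h1 := hDHX n
    have h2 := hDle n
    have h3 := hPG n
    rw [hGdef] at h3
    dsimp only at h3
    linarith
  -- equality points
  have hEq : ∀ B : ℕ, ∃ m, B < m ∧ P m = H m := by
    intro B
    have hbB : B < nk (B + 1) := lt_of_lt_of_le (Nat.lt_succ_self B) hmono.le_apply
    set b := nk (B + 1) with hbdef
    set v := u b with hvdef
    have hbv : b ≤ v := humono.le_apply
    set m := Nat.findGreatest (fun m => D m = Dm v) v with hmdef
    obtain ⟨m0, hm0mem, hm0⟩ :=
      Finset.exists_mem_eq_sup' (s := Finset.range (v+1)) (H := Finset.nonempty_range_add_one) D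
    have hm0le : m0 ≤ v := by rw [Finset.mem_range] at hm0mem; omega
    have hDmv : Dm v = D m0 := hm0
    have hmspec : D m = Dm v := by
      rw [hmdef]
      exact Nat.findGreatest_spec (P := fun m => D m = Dm v) hm0le hDmv.symm
    have hmle : m ≤ v := Nat.findGreatest_le v
    have hbm : b ≤ m := by
      by_contra hcon
      push_neg at hcon
      have h1 : D m ≤ Dm m := hDle m
      have h2 : Dm m ≤ Dm b := hDmono hcon.le
      have h3 : Dm b = D b := hNt (B+1)
      have h4 : Dm b ≤ Dm v := hDmono hbv
      have h5 : D b = Dm v := by linarith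
      have h6 : b ≤ m := by
        rw [hmdef]
        exact Nat.le_findGreatest hbv h5
      omega
    have hflatm : Dm m = Dm v := by
      have h1 : Dm m ≤ Dm v := hDmono hmle
      have h3 : D m ≤ Dm m := hDle m
      linarith [hmspec]
    have htv : P v = G v := htouch b
    have hsum1 : ∑ j ∈ Finset.Ico m v, ξ j ≤ ∑ j ∈ Finset.Ico m v, ρ j :=
      Finset.sum_le_sum fun j _ => hρξ j
    have e1 : ∑ j ∈ Finset.Ico m v, ρ j = P v - P m := Finset.sum_Ico_eq_sub ρ hmle
    have e2 : ∑ j ∈ Finset.Ico m v, ξ j = X v - X m := Finset.sum_Ico_eq_sub ξ hmle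
    have hfin : P m = H m := by
      have hGm : G m ≤ P m := hPG m
      have hHm : H m = X m + D m := by have := hDHX m; linarith
      have hGmval : G m = X m + Dm m := rfl
      have hGvval : G v = X v + Dm v := rfl
      linarith
    exact ⟨m, by omega, hfin⟩
  -- limit of ρ
  have hρl : Tendsto ρ atTop (nhds 0) := by
    rw [tendsto_order]
    constructor
    · intro a ha
      filter_upwards with n
      exact lt_of_lt_of_le ha (hρ0 n)
    · intro a ha
      have hev := hΔG0.eventually (gt_mem_nhds (half_pos ha))
      rw [eventually_atTop] at hev
      obtain ⟨M, hM⟩ := hev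
      have huM : M ≤ u M := humono.le_apply
      have hσM : σ M ≤ a / 2 := by
        have hle : u M ≤ u (M+1) := (humono (Nat.lt_succ_self M)).le
        have ht := htele (u M) (u (M+1)) hle
        have hbound : G (u (M+1)) - G (u M)
            ≤ ((u (M+1) - u M : ℕ):ℝ) * (a/2) := by
          rw [← ht]
          have hstep : ∀ j ∈ Finset.Ico (u M) (u (M+1)), G (j+1) - G j ≤ a/2 := by
            intro j hj
            rw [Finset.mem_Ico] at hj
            exact (hM j (by omega)).le
          calc ∑ j ∈ Finset.Ico (u M) (u (M+1)), (G (j+1) - G j)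
              ≤ ∑ _j ∈ Finset.Ico (u M) (u (M+1)), (a/2) := Finset.sum_le_sum hstep
          _ = ((u (M+1) - u M : ℕ):ℝ) * (a/2) := by
              rw [Finset.sum_const, Nat.card_Ico, nsmul_eq_mul]
        rw [hσdef]
        dsimp only
        rw [div_le_iff₀ (hupos M)]
        have hcast : ((u (M+1) - u M : ℕ):ℝ) = (u (M+1):ℝ) - (u M:ℝ) := by
          push_cast [Nat.cast_sub hle]
          ring
        rw [hcast] at hbound
        linarith
      rw [eventually_atTop]
      refine ⟨u M, fun n hn => ?_⟩
      have h1 : ρ n ≤ ρ (u M) := hρanti hn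
      have h2 : ρ (u M) = σ M := hρblk le_rfl (humono (Nat.lt_succ_self M))
      linarith
  -- assemble
  choose F hF1 hF2 using hEq
  refine ⟨ρ, hρanti, hρ0, hρl, hρξ, fun n => hPH n, fun k => F^[k+1] 0, ?_, ?_⟩
  · apply strictMono_nat_of_lt_succ
    intro k
    rw [Function.iterate_succ_apply' F (k+1) 0]
    exact hF1 _
  · intro k
    have hiter : F^[k+1] 0 = F (F^[k] 0) := Function.iterate_succ_apply' F k 0
    dsimp only
    rw [hiter]
    exact (hF2 (F^[k] 0)).symm


theorem stmt8 (ξ η : ℕ → ℝ)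
    (hξa : Antitone ξ) (hξ0 : ∀ n, 0 ≤ ξ n) (hξl : Tendsto ξ atTop (nhds 0))
    (hηa : Antitone η) (hη0 : ∀ n, 0 ≤ η n) (hηl : Tendsto η atTop (nhds 0)) :
    ((∃ nk : ℕ → ℕ, nk 0 = 0 ∧ StrictMono nk ∧
        ∀ k m, nk k ≤ m → m < nk (k + 1) →
          0 ≤ ∑ j ∈ Finset.Ico m (nk (k + 1)), (η j - ξ j)) ↔
      (∃ ζ : ℕ → ℝ, Antitone ζ ∧ (∀ n, 0 ≤ ζ n) ∧ Tendsto ζ atTop (nhds 0) ∧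
        (∀ n, ζ n ≤ η n) ∧
        (∀ n, ∑ j ∈ Finset.range n, ζ j ≤ ∑ j ∈ Finset.range n, ξ j) ∧
        ∃ mk : ℕ → ℕ, StrictMono mk ∧
          ∀ k, ∑ j ∈ Finset.range (mk k), ζ j = ∑ j ∈ Finset.range (mk k), ξ j)) ∧
    ((∃ nk : ℕ → ℕ, nk 0 = 0 ∧ StrictMono nk ∧
        ∀ k m, nk k ≤ m → m < nk (k + 1) →
          0 ≤ ∑ j ∈ Finset.Ico m (nk (k + 1)), (η j - ξ j)) ↔
      (∃ ρ : ℕ → ℝ, Antitone ρ ∧ (∀ n, 0 ≤ ρ n) ∧ Tendsto ρ atTop (nhds 0) ∧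
        (∀ n, ξ n ≤ ρ n) ∧
        (∀ n, ∑ j ∈ Finset.range n, η j ≤ ∑ j ∈ Finset.range n, ρ j) ∧
        ∃ mk : ℕ → ℕ, StrictMono mk ∧
          ∀ k, ∑ j ∈ Finset.range (mk k), η j = ∑ j ∈ Finset.range (mk k), ρ j)) := by
  constructor
  · constructor
    · rintro ⟨nk, h0, hmono, hcond⟩
      exact dir_i_to_iii ξ η hξa hξ0 hηa hη0 hηl nk h0 hmono hcond
    · rintro ⟨ζ, hζa, hζ0, hζl, hζη, hζξ, mk, hmk, heq⟩
      exact dir_iii_to_i ξ η ζ hζη hζξ mk hmk heq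
  · constructor
    · rintro ⟨nk, h0, hmono, hcond⟩
      exact dir_i_to_iii' ξ η hξa hξ0 hξl hηa hη0 hηl nk h0 hmono hcond
    · rintro ⟨ρ, hρa, hρ0, hρl, hξρ, hηρ, mk, hmk, heq⟩
      exact dir_iii'_to_i ξ η ρ hξρ hηρ mk hmk heq
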